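/- For U_t = exp(-i·t·H(K_n)) and t = π·k/n with k ≥ 1 an integer, |[U_t]_{ii}| = 1 for every i and [U_t]_{ij} = 0 for every i ≠ j; i.e., U_t is a diagonal unitary (the excitation returns perfectly to its starting site). -/

import Mathlib

open NormedSpace

lemma exp_smul_idem {n : ℕ} (Q : Matrix (Fin n) (Fin n) ℂ) (hQ : Q * Q = Q) (s : ℂ) :
    NormedSpace.exp (s • Q) = 1 + (Complex.exp s - 1) • Q := by
  have hQpow : ∀ m : ℕ, 1 ≤ m → Q ^ m = Q := by
    intro m hm
    induction m with
    | zero => omega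
    | succ m ih =>
      rcases Nat.eq_or_lt_of_le hm with h | h
      · simp [← h]
      · rw [pow_succ, ih (by omega), hQ]
  have hsum : Summable fun m : ℕ => (s ^ m / (m.factorial : ℂ)) • Q :=
    (NormedSpace.expSeries_div_summable s).smul_const Q
  have hG : ∑' m : ℕ, (s ^ m / (m.factorial : ℂ)) • Q = Complex.exp s • Q := by
    rw [Summable.tsum_smul_const (NormedSpace.expSeries_div_summable s)]
    congr 1
    rw [Complex.exp_eq_exp_ℂ, NormedSpace.exp_eq_tsum_div]
  have hH : ∑' m : ℕ, (if m = 0 then (1 - Q : Matrix (Fin n) (Fin n) ℂ) else 0) = 1 - Q := by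
    rw [tsum_eq_single 0]
    · simp
    · intro m hm; simp [hm]
  have key : (fun m : ℕ => ((m.factorial : ℂ))⁻¹ • (s • Q) ^ m)
      = (fun m : ℕ => (s ^ m / (m.factorial : ℂ)) • Q + (if m = 0 then (1 - Q : Matrix (Fin n) (Fin n) ℂ) else 0)) := by
    funext m
    rcases Nat.eq_zero_or_pos m with h | h
    · subst h; simp
    · rw [if_neg (by omega), add_zero, smul_pow, hQpow m h, smul_smul, div_eq_inv_mul]
  rw [NormedSpace.exp_eq_tsum ℂ]; rw [show (fun x : Matrix (Fin n) (Fin n) ℂ => ∑' m : ℕ, ((m.factorial : ℂ))⁻¹ • x ^ m) (s • Q) = ∑' m : ℕ, ((m.factorial : ℂ))⁻¹ • (s • Q) ^ m from rfl, key, Summable.tsum_add hsum (summable_of_ne_finset_zero (s := {0}) (by intro m hm; simp at hm; simp [hm])), hG, hH]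
  module

theorem complete_graph_perfect_return (n : ℕ) (hn : 1 ≤ n) (k : ℕ) (hk : 1 ≤ k)
    (t : ℝ) (ht : t = Real.pi * k / n)
    (H : Matrix (Fin n) (Fin n) ℂ)
    (hH : H = ((n * (n - 5) / 2 : ℂ)) • (1 : Matrix (Fin n) (Fin n) ℂ)
        + 2 • (Matrix.of fun _ _ : Fin n => (1 : ℂ)))
    (U : Matrix (Fin n) (Fin n) ℂ)
    (hU : U = NormedSpace.exp ((-(Complex.I * t)) • H)) :
    (∀ i : Fin n, ‖U i i‖ = 1) ∧
    (∀ i j : Fin n, i ≠ j → U i j = 0) := by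
  have hn0 : (n : ℂ) ≠ 0 := Nat.cast_ne_zero.mpr (by omega)
  have hnR : (n : ℝ) ≠ 0 := Nat.cast_ne_zero.mpr (by omega)
  set J : Matrix (Fin n) (Fin n) ℂ := Matrix.of fun _ _ : Fin n => (1 : ℂ) with hJ
  set a : ℂ := -(Complex.I * t) * ((n : ℂ) * ((n : ℂ) - 5) / 2) with ha
  set s' : ℂ := -(Complex.I * t) * 2 with hs'
  have hsplit : (-(Complex.I * t)) • H = a • (1 : Matrix (Fin n) (Fin n) ℂ) + s' • J := by
    rw [hH]; module
  have hcomm : Commute (a • (1 : Matrix (Fin n) (Fin n) ℂ)) (s' • J) :=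
    ((Commute.one_left J).smul_left a).smul_right s'
  have hJJ : J * J = (n : ℂ) • J := by
    ext i j
    simp [hJ, Matrix.mul_apply, Matrix.smul_apply]
  set Q : Matrix (Fin n) (Fin n) ℂ := ((n : ℂ))⁻¹ • J with hQdef
  have hQ : Q * Q = Q := by
    rw [hQdef, Matrix.smul_mul, Matrix.mul_smul, hJJ, smul_smul, smul_smul]
    congr 1
    field_simp
  have hsJ : s' • J = (s' * n) • Q := by
    rw [hQdef, smul_smul]
    congr 1
    field_simp
  have htn : (t : ℂ) * n = ((Real.pi * k : ℝ) : ℂ) := by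
    rw [ht]; push_cast; field_simp
  have hexp_sn : Complex.exp (s' * n) = 1 := by
    have htc : (t : ℂ) = ((Real.pi * k : ℝ) : ℂ) / n := by
      rw [ht]; push_cast; ring
    have hc : ((Real.pi * k : ℝ) : ℂ) / n * n = ((Real.pi * k : ℝ) : ℂ) :=
      div_mul_cancel₀ _ hn0
    have : s' * n = ((-(k : ℤ) : ℤ) : ℂ) * (2 * Real.pi * Complex.I) := by
      rw [hs', htc]
      push_cast at hc ⊢
      linear_combination (-2 * Complex.I) * hc
    rw [this, Complex.exp_int_mul_two_pi_mul_I]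
  have hexpJ : NormedSpace.exp (s' • J) = 1 := by
    rw [hsJ, exp_smul_idem Q hQ, hexp_sn, sub_self, zero_smul, add_zero]
  have hexp1 : NormedSpace.exp (a • (1 : Matrix (Fin n) (Fin n) ℂ))
      = Complex.exp a • (1 : Matrix (Fin n) (Fin n) ℂ) := by
    rw [exp_smul_idem 1 (one_mul 1) a, sub_smul, one_smul]
    module
  have hUfin : U = Complex.exp a • (1 : Matrix (Fin n) (Fin n) ℂ) := by
    rw [hU, hsplit, Matrix.exp_add_of_commute _ _ hcomm, hexpJ, hexp1, mul_one]
  have habs : ‖Complex.exp a‖ = 1 := by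
    have : a = ((-(t * ((n : ℝ) * ((n : ℝ) - 5) / 2)) : ℝ) : ℂ) * Complex.I := by
      rw [ha]; push_cast; ring
    rw [this, Complex.norm_exp_ofReal_mul_I]
  constructor
  · intro i
    rw [hUfin]
    simp [Matrix.smul_apply, Matrix.one_apply_eq, habs]
  · intro i j hij
    rw [hUfin]
    simp [Matrix.smul_apply, Matrix.one_apply_ne hij]
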